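/- arXiv:2208.07464 — 2 statements merged into one kernel-verified Lean document; each statement's English description precedes it below -/
import Mathlib

section
/- For the special case of a binary smoothed classifier: if p = g^μ_1(x) > 1/2, where g^μ_1(x) = E_{ε ~ N(0,σ²I)}[g_1(x+ε)] and g_1 : ℝ^d → [0,1], then g^μ_1(x+δ) > 1/2 for all δ with ‖δ‖₂ < σ Φ⁻¹(p). -/
open MeasureTheory ProbabilityTheory

/-- Standard normal CDF. -/
noncomputable def Phi : ℝ → ℝ := fun t => cdf (gaussianReal 0 1) t

/-- Inverse of the standard normal CDF. -/
noncomputable def PhiInv : ℝ → ℝ := Function.invFun Phi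

/-- Isotropic Gaussian `N(0, σ²I)` on `ℝ^d`. -/
noncomputable def gaussPi (d : ℕ) (σ : ℝ) : Measure (EuclideanSpace ℝ (Fin d)) :=
  Measure.map (WithLp.toLp 2) (Measure.pi (fun _ : Fin d => gaussianReal 0 (Real.toNNReal (σ ^ 2))))

open scoped ENNReal NNReal

namespace BSC

lemma volE_pi (d : ℕ) :
    (volume : Measure (EuclideanSpace ℝ (Fin d))) = Measure.map (WithLp.toLp 2) (Measure.pi (fun _ : Fin d => (volume : Measure ℝ))) := by
  rw [← volume_pi]
  exact (PiLp.volume_preserving_toLp (Fin d)).map_eq.symm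

lemma lintegral_pi_prod : ∀ (n : ℕ) (f : Fin n → ℝ → ℝ≥0∞), (∀ i, Measurable (f i)) →
    ∫⁻ x : Fin n → ℝ, ∏ i, f i (x i) ∂(Measure.pi fun _ => (volume : Measure ℝ))
      = ∏ i, ∫⁻ y, f i y := by
  intro n
  induction n with
  | zero =>
    intro f _
    simp [Measure.pi_of_empty (fun _ : Fin 0 => (volume : Measure ℝ))]
  | succ n ih =>
    intro f hf
    have h := ((measurePreserving_piFinSuccAbove (fun _ : Fin (n+1) => (volume : Measure ℝ)) 0).symm)
    rw [← h.lintegral_comp_emb (MeasurableEquiv.measurableEmbedding _)]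
    simp_rw [MeasurableEquiv.piFinSuccAbove_symm_apply, Fin.insertNthEquiv,
      Fin.prod_univ_succ, Fin.insertNth_zero]
    simp only [Fin.zero_succAbove, cast_eq, Function.comp_def, Equiv.coe_fn_mk, Fin.cons_zero,
      Fin.cons_succ]
    have hg : Measurable fun z : Fin n → ℝ => ∏ j : Fin n, f j.succ (z j) :=
      Finset.measurable_prod _ fun j _ => (hf j.succ).comp (measurable_pi_apply j)
    have key := lintegral_prod_mul (μ := (volume : Measure ℝ))
      (ν := Measure.pi fun _ : Fin n => (volume : Measure ℝ))
      (f := f 0) (g := fun z => ∏ j : Fin n, f j.succ (z j)) (hf 0).aemeasurable hg.aemeasurable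
    exact key.trans (congrArg (fun z => (∫⁻ y, f 0 y) * z)
      (ih (fun j => f j.succ) (fun j => hf j.succ)))

variable {d : ℕ} {σ : ℝ}

lemma meas_coord (i : Fin d) : Measurable fun ε : EuclideanSpace ℝ (Fin d) => ε i :=
  (measurable_pi_apply i).comp (WithLp.measurable_ofLp 2 _)

lemma gaussPi_eq (hσ : 0 < σ) :
    gaussPi d σ = (volume : Measure (EuclideanSpace ℝ (Fin d))).withDensity
      (fun ε => ∏ i, gaussianPDF 0 (Real.toNNReal (σ ^ 2)) (ε i)) := by
  have hv : (Real.toNNReal (σ ^ 2)) ≠ 0 := by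
    simp [Real.toNNReal_eq_zero, not_le, pow_pos hσ, hσ.ne']
  set v := Real.toNNReal (σ ^ 2) with hvdef
  have hDm : ∀ i : Fin d, Measurable fun y : ℝ => gaussianPDF 0 v y :=
    fun _ => measurable_gaussianPDF 0 v
  have key : Measure.pi (fun _ : Fin d => gaussianReal 0 v) = (Measure.pi fun _ : Fin d =>
      (volume : Measure ℝ)).withDensity (fun a => ∏ i, gaussianPDF 0 v (a i)) := by
     refine (Measure.pi_eq fun s hs => ?_)
     have hbox : MeasurableSet (α := Fin d → ℝ) (Set.pi Set.univ s) :=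
      MeasurableSet.univ_pi hs
     have hpt : ∀ x : Fin d → ℝ,
        (Set.pi Set.univ s).indicator (fun x => ∏ i, gaussianPDF 0 v (x i)) x
          = ∏ i, (s i).indicator (fun y => gaussianPDF 0 v y) (x i) := by
      intro x
      by_cases hx : x ∈ Set.pi Set.univ s
      · rw [Set.indicator_of_mem hx]
        exact Finset.prod_congr rfl fun i _ => by
          rw [Set.indicator_of_mem (hx i (Set.mem_univ i))]
      · rw [Set.indicator_of_notMem hx]
        rw [Set.mem_univ_pi] at hx
        push_neg at hx
        obtain ⟨i, hi⟩ := hx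
        exact (Finset.prod_eq_zero (Finset.mem_univ i) (Set.indicator_of_notMem hi _)).symm
     calc ((Measure.pi fun _ : Fin d => (volume : Measure ℝ)).withDensity
            (fun ε => ∏ i, gaussianPDF 0 v (ε i))) (Set.pi Set.univ s)
        = ∫⁻ a, (Set.pi Set.univ s).indicator (fun x => ∏ i, gaussianPDF 0 v (x i)) a
            ∂(Measure.pi fun _ : Fin d => (volume : Measure ℝ)) := by
              rw [withDensity_apply _ hbox, lintegral_indicator hbox]
      _ = ∫⁻ a : Fin d → ℝ, (∏ i, (s i).indicator (fun y => gaussianPDF 0 v y) (a i))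
            ∂(Measure.pi fun _ : Fin d => (volume : Measure ℝ)) := lintegral_congr hpt
      _ = ∏ i : Fin d, ∫⁻ y, (s i).indicator (fun y => gaussianPDF 0 v y) y :=
          lintegral_pi_prod d _ (fun i => (hDm i).indicator (hs i))
      _ = ∏ i : Fin d, (gaussianReal 0 v) (s i) := by
          refine Finset.prod_congr rfl fun i _ => ?_
          rw [gaussianReal_of_var_ne_zero 0 hv, withDensity_apply _ (hs i),
            ← lintegral_indicator (hs i)]
  have hDD : Measurable fun ε : EuclideanSpace ℝ (Fin d) => ∏ i, gaussianPDF 0 v (ε i) :=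
    Finset.measurable_prod _ fun i _ => (hDm i).comp (meas_coord i)
  rw [gaussPi, key, volE_pi d]
  ext s hs
  have hT := WithLp.measurable_toLp 2 (Fin d → ℝ)
  rw [Measure.map_apply hT hs, withDensity_apply _ hs,
    withDensity_apply _ (hT hs), setLIntegral_map hs hDD hT]


lemma prod_pdf_eq_norm_form (hσ : 0 < σ) (ε : EuclideanSpace ℝ (Fin d)) :
    (∏ i, gaussianPDF 0 (Real.toNNReal (σ ^ 2)) (ε i))
      = ENNReal.ofReal (((Real.sqrt (2 * Real.pi * σ ^ 2))⁻¹) ^ d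
          * Real.exp (- ‖ε‖ ^ 2 / (2 * σ ^ 2))) := by
  have hc : ((Real.toNNReal (σ ^ 2) : ℝ≥0) : ℝ) = σ ^ 2 := Real.coe_toNNReal _ (sq_nonneg σ)
  have hnorm : ‖ε‖ ^ 2 = ∑ i, (ε i) ^ 2 := by
    rw [PiLp.norm_sq_eq_of_L2]
    exact Finset.sum_congr rfl fun i _ => by rw [Real.norm_eq_abs, sq_abs]
  simp only [gaussianPDF_def]
  rw [← ENNReal.ofReal_prod_of_nonneg (fun i _ => gaussianPDFReal_nonneg 0 _ (ε i))]
  congr 1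
  simp only [gaussianPDFReal, hc, sub_zero]
  rw [Finset.prod_mul_distrib, Finset.prod_const, ← Real.exp_sum, Finset.card_univ,
    Fintype.card_fin, hnorm]
  congr 1
  rw [← Finset.sum_div, Finset.sum_neg_distrib, neg_div]

lemma gaussPi_map_rot (hσ : 0 < σ)
    (Q : EuclideanSpace ℝ (Fin d) ≃ₗᵢ[ℝ] EuclideanSpace ℝ (Fin d)) :
    (gaussPi d σ).map Q = gaussPi d σ := by
  set Dn : EuclideanSpace ℝ (Fin d) → ℝ≥0∞ := fun ε =>
    ENNReal.ofReal (((Real.sqrt (2 * Real.pi * σ ^ 2))⁻¹) ^ d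
      * Real.exp (- ‖ε‖ ^ 2 / (2 * σ ^ 2))) with hDn
  have hDnm : Measurable Dn := by
    apply Measurable.ennreal_ofReal
    exact (measurable_const.mul ((measurable_norm.pow_const 2).neg.div_const _).exp)
  have hgd : gaussPi d σ = (volume : Measure (EuclideanSpace ℝ (Fin d))).withDensity Dn := by
    rw [gaussPi_eq hσ]
    exact withDensity_congr_ae (Filter.Eventually.of_forall fun ε => prod_pdf_eq_norm_form hσ ε)
  have hDQ : ∀ η, Dn (Q.symm η) = Dn η := by
    intro η
    simp only [hDn, LinearIsometryEquiv.norm_map]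
  ext s hs
  rw [Measure.map_apply Q.continuous.measurable hs, hgd,
    withDensity_apply _ (hs.preimage Q.continuous.measurable), withDensity_apply _ hs,
    ← lintegral_indicator (hs.preimage Q.continuous.measurable) _, ← lintegral_indicator hs _]
  have hsub := (Q.symm.measurePreserving).lintegral_comp_emb
    (Q.symm.toMeasurableEquiv.measurableEmbedding) ((⇑Q ⁻¹' s).indicator Dn)
  rw [← hsub]
  refine lintegral_congr fun η => ?_
  by_cases hη : η ∈ s
  · rw [Set.indicator_of_mem hη, Set.indicator_of_mem (by simp [hη]), hDQ]
  · rw [Set.indicator_of_notMem hη, Set.indicator_of_notMem (by simp [hη])]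


lemma stdGaussian_Iio (t : ℝ) :
    (gaussianReal 0 1) (Set.Iio t) = ENNReal.ofReal (Phi t) := by
  have h0 : (gaussianReal 0 1) {t} = 0 :=
    (gaussianReal_absolutelyContinuous 0 one_ne_zero) (Real.volume_singleton)
  have hIic : Set.Iic t = Set.Iio t ∪ {t} := (Set.Iio_union_right).symm
  rw [Phi, ofReal_cdf, hIic]
  refine le_antisymm (measure_mono Set.subset_union_left) ?_
  calc (gaussianReal 0 1) (Set.Iio t ∪ {t}) ≤ (gaussianReal 0 1) (Set.Iio t)
        + (gaussianReal 0 1) {t} := measure_union_le _ _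
    _ = (gaussianReal 0 1) (Set.Iio t) := by rw [h0, add_zero]

lemma gaussianReal_Iio (hσ : 0 < σ) (t : ℝ) :
    (gaussianReal 0 (Real.toNNReal (σ ^ 2))) (Set.Iio t) = ENNReal.ofReal (Phi (t / σ)) := by
  have hmap : (gaussianReal 0 1).map (σ * ·) = gaussianReal 0 (Real.toNNReal (σ^2)) := by
    rw [gaussianReal_map_const_mul σ]
    congr 1
    · ring
    · ext; simp [Real.coe_toNNReal _ (sq_nonneg σ)]
  rw [← hmap, Measure.map_apply (measurable_const_mul σ) measurableSet_Iio]
  have hpre : (σ * ·) ⁻¹' (Set.Iio t) = Set.Iio (t / σ) := by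
    ext y
    simp only [Set.mem_preimage, Set.mem_Iio]
    rw [lt_div_iff₀' hσ]
  rw [hpre, stdGaussian_Iio]

lemma gaussPi_linear_lt (hσ : 0 < σ) {δ : EuclideanSpace ℝ (Fin d)} (hδ : δ ≠ 0) (b : ℝ) :
    gaussPi d σ {ε : EuclideanSpace ℝ (Fin d) | ∑ i, ε i * δ i < b}
      = ENNReal.ofReal (Phi (b / (σ * ‖δ‖))) := by
  have hinner_eq : ∀ x y : EuclideanSpace ℝ (Fin d), (inner ℝ x y : ℝ) = ∑ i, x i * y i := by
    intro x y
    rw [PiLp.inner_apply]; simp [RCLike.inner_apply, mul_comm]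
  rcases Nat.eq_zero_or_pos d with rfl | hd
  · exact absurd (by ext i; exact i.elim0) hδ
  set i₀ : Fin d := ⟨0, hd⟩
  have hnδ : (0:ℝ) < ‖δ‖ := norm_pos_iff.mpr hδ
  set u : EuclideanSpace ℝ (Fin d) := ‖δ‖⁻¹ • δ with hu_def
  have hu : ‖u‖ = 1 := by
    rw [hu_def, norm_smul, norm_inv, norm_norm, inv_mul_cancel₀ hnδ.ne']
  have hon : Orthonormal ℝ (Set.restrict {i₀} fun _ : Fin d => u) := by
    constructor
    · intro i; exact hu
    · intro i j hij
      exact absurd (Subtype.ext ((Set.mem_singleton_iff.mp i.2).trans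
        (Set.mem_singleton_iff.mp j.2).symm)) hij
  obtain ⟨bB, hbB⟩ := hon.exists_orthonormalBasis_extension_of_card_eq
    (by rw [finrank_euclideanSpace_fin, Fintype.card_fin])
  set Q := bB.repr.symm with hQdef
  have hQ : Q (EuclideanSpace.single i₀ 1) = u :=
    (bB.repr_symm_single i₀).trans (hbB i₀ rfl)
  have hSmeas : MeasurableSet {ε : EuclideanSpace ℝ (Fin d) | ∑ i, ε i * δ i < b} :=
    measurableSet_lt (Finset.measurable_sum _ fun i _ =>
      (meas_coord i).mul_const _) measurable_const
  rw [← gaussPi_map_rot hσ Q, Measure.map_apply Q.continuous.measurable hSmeas]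
  have hlin : ∀ η : EuclideanSpace ℝ (Fin d), ∑ i, (Q η) i * δ i = ‖δ‖ * η i₀ := by
    intro η
    have hδu : ‖δ‖ • u = δ := by
      rw [hu_def, smul_smul, mul_inv_cancel₀ hnδ.ne', one_smul]
    calc ∑ i, (Q η) i * δ i = (inner ℝ (Q η) δ : ℝ) := (hinner_eq _ _).symm
      _ = (inner ℝ (Q η) (‖δ‖ • u) : ℝ) := by rw [hδu]
      _ = ‖δ‖ * (inner ℝ (Q η) u : ℝ) := real_inner_smul_right _ _ _
      _ = ‖δ‖ * (inner ℝ (Q η) (Q (EuclideanSpace.single i₀ 1)) : ℝ) := by rw [hQ]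
      _ = ‖δ‖ * (inner ℝ η (EuclideanSpace.single i₀ 1) : ℝ) := by
          rw [Q.inner_map_map]
      _ = ‖δ‖ * η i₀ := by rw [EuclideanSpace.inner_single_right]; simp
  have hpre : ⇑Q ⁻¹' {ε : EuclideanSpace ℝ (Fin d) | ∑ i, ε i * δ i < b}
      = WithLp.ofLp ⁻¹' Set.pi Set.univ (Function.update (fun _ : Fin d => (Set.univ : Set ℝ)) i₀
          (Set.Iio (b / ‖δ‖))) := by
    ext η
    simp only [Set.mem_preimage, Set.mem_setOf_eq, Set.mem_univ_pi, hlin η]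
    constructor
    · intro h
      refine fun i => ?_
      rw [Function.update_apply]
      split_ifs with hi
      · rw [hi]; exact Set.mem_Iio.mpr ((lt_div_iff₀' hnδ).mpr h)
      · exact Set.mem_univ _
    · intro h
      have h2 := h i₀
      rw [Function.update_apply, if_pos rfl] at h2
      exact (lt_div_iff₀' hnδ).mp (Set.mem_Iio.mp h2)
  have hpp : gaussPi d σ (WithLp.ofLp ⁻¹' Set.pi Set.univ (Function.update
        (fun _ : Fin d => (Set.univ : Set ℝ)) i₀ (Set.Iio (b / ‖δ‖))))
      = ∏ i, (gaussianReal 0 (Real.toNNReal (σ ^ 2)))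
          ((Function.update (fun _ : Fin d => (Set.univ : Set ℝ)) i₀
              (Set.Iio (b / ‖δ‖))) i) :=
    (MeasurableEquiv.map_apply (MeasurableEquiv.toLp 2 (Fin d → ℝ)) _).trans (Measure.pi_pi _ _)
  rw [hpre, hpp]
  calc ∏ i, (gaussianReal 0 (Real.toNNReal (σ ^ 2)))
        ((Function.update (fun _ : Fin d => (Set.univ : Set ℝ)) i₀ (Set.Iio (b / ‖δ‖))) i)
      = ∏ i, (if i = i₀ then (gaussianReal 0 (Real.toNNReal (σ ^ 2))) (Set.Iio (b / ‖δ‖))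
          else 1) := by
        refine Finset.prod_congr rfl fun i _ => ?_
        rw [Function.update_apply]
        split_ifs with h
        · rfl
        · exact measure_univ
    _ = (gaussianReal 0 (Real.toNNReal (σ ^ 2))) (Set.Iio (b / ‖δ‖)) := by
        rw [Finset.prod_ite_eq' Finset.univ i₀
          (fun _ => (gaussianReal 0 (Real.toNNReal (σ ^ 2))) (Set.Iio (b / ‖δ‖))),
          if_pos (Finset.mem_univ i₀)]
    _ = ENNReal.ofReal (Phi (b / (σ * ‖δ‖))) := by
        rw [gaussianReal_Iio hσ, div_div, mul_comm ‖δ‖ σ]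


lemma gaussPi_shift (hσ : 0 < σ) (δ : EuclideanSpace ℝ (Fin d))
    {f : EuclideanSpace ℝ (Fin d) → ℝ≥0∞} (hf : Measurable f) :
    ∫⁻ ε, f (ε + δ) ∂(gaussPi d σ)
      = ∫⁻ ε, f ε * ENNReal.ofReal (Real.exp
          ((2 * (∑ i, ε i * δ i) - ∑ i, (δ i)^2) / (2 * σ^2))) ∂(gaussPi d σ) := by
  have hc : ((Real.toNNReal (σ ^ 2) : ℝ≥0) : ℝ) = σ ^ 2 := Real.coe_toNNReal _ (sq_nonneg σ)
  set v := Real.toNNReal (σ ^ 2) with hvdef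
  set D : EuclideanSpace ℝ (Fin d) → ℝ≥0∞ := fun ε => ∏ i, gaussianPDF 0 v (ε i) with hDdef
  set R : EuclideanSpace ℝ (Fin d) → ℝ≥0∞ := fun ε =>
    ENNReal.ofReal (Real.exp ((2 * (∑ i, ε i * δ i) - ∑ i, (δ i)^2) / (2 * σ^2))) with hRdef
  have hD : Measurable D :=
    Finset.measurable_prod _ fun i _ => (measurable_gaussianPDF 0 v).comp (meas_coord i)
  have hRm : Measurable R := by
    apply Measurable.ennreal_ofReal
    exact (((Finset.measurable_sum _ fun i _ =>
      (meas_coord i).mul_const (δ i)).const_mul 2).sub_const _).div_const _ |>.exp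
  have per : ∀ y a : ℝ, gaussianPDFReal 0 v (y - a)
      = gaussianPDFReal 0 v y * Real.exp ((2 * (y * a) - a^2) / (2 * σ^2)) := by
    intro y a
    simp only [gaussianPDFReal, sub_zero, hc]
    rw [mul_assoc ((Real.sqrt (2 * Real.pi * σ ^ 2))⁻¹), ← Real.exp_add]
    congr 1
    field_simp
    ring
  have hpt : ∀ ε : EuclideanSpace ℝ (Fin d), D (ε - δ) = D ε * R ε := by
    intro ε
    have happ : ∀ i, (ε - δ) i = ε i - δ i := fun i => rfl
    calc D (ε - δ) = ∏ i, gaussianPDF 0 v (ε i - δ i) :=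
          Finset.prod_congr rfl fun i _ => by rw [happ]
      _ = ∏ i, (gaussianPDF 0 v (ε i)
            * ENNReal.ofReal (Real.exp ((2 * (ε i * δ i) - (δ i)^2) / (2 * σ^2)))) := by
          refine Finset.prod_congr rfl fun i _ => ?_
          rw [gaussianPDF, gaussianPDF, per (ε i) (δ i),
            ENNReal.ofReal_mul (gaussianPDFReal_nonneg 0 v (ε i))]
      _ = D ε * ∏ i, ENNReal.ofReal (Real.exp ((2 * (ε i * δ i) - (δ i)^2) / (2 * σ^2))) :=
          Finset.prod_mul_distrib
      _ = D ε * R ε := by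
          rw [← ENNReal.ofReal_prod_of_nonneg (fun i _ => (Real.exp_nonneg _)), ← Real.exp_sum]
          congr 2
          rw [← Finset.sum_div]
          congr 1
          rw [Finset.sum_sub_distrib, Finset.mul_sum]
  rw [gaussPi_eq hσ, ← hvdef,
    lintegral_withDensity_eq_lintegral_mul volume hD
      (show Measurable fun ε : EuclideanSpace ℝ (Fin d) => f (ε + δ) from
        hf.comp (measurable_add_const δ)),
    lintegral_withDensity_eq_lintegral_mul volume hD
      (show Measurable fun ε : EuclideanSpace ℝ (Fin d) => f ε * ENNReal.ofReal (Real.exp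
          ((2 * (∑ i, ε i * δ i) - ∑ i, (δ i)^2) / (2 * σ^2))) from hf.mul hRm)]
  have hshift := lintegral_add_right_eq_self
    (μ := (volume : Measure (EuclideanSpace ℝ (Fin d)))) (fun ε => D (ε - δ) * f ε) δ
  simp only [add_sub_cancel_right] at hshift
  calc ∫⁻ ε, (D * fun ε => f (ε + δ)) ε ∂volume
      = ∫⁻ ε, D (ε - δ) * f ε ∂volume := hshift
    _ = ∫⁻ ε, (D * fun ε => f ε * R ε) ε ∂volume := by
        refine lintegral_congr fun ε => ?_
        simp only [Pi.mul_apply]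
        rw [hpt ε]
        ring


lemma stdGaussian_singleton (t : ℝ) : (gaussianReal 0 1) {t} = 0 :=
  (gaussianReal_absolutelyContinuous 0 one_ne_zero) Real.volume_singleton

lemma Phi_decomp {s t : ℝ} (h : s ≤ t) :
    (gaussianReal 0 1) (Set.Iic t)
      = (gaussianReal 0 1) (Set.Iic s) + (gaussianReal 0 1) (Set.Ioc s t) := by
  rw [← Set.Iic_union_Ioc_eq_Iic h]
  exact measure_union (Set.Iic_disjoint_Ioc le_rfl) measurableSet_Ioc

lemma Phi_eq_toReal (t : ℝ) : Phi t = ((gaussianReal 0 1) (Set.Iic t)).toReal :=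
  cdf_eq_real _ _

lemma Phi_strict {s t : ℝ} (h : s < t) : Phi s < Phi t := by
  have hIoc : (0:ℝ≥0∞) < (gaussianReal 0 1) (Set.Ioc s t) := by
    rw [gaussianReal_of_var_ne_zero 0 one_ne_zero]
    rw [pos_iff_ne_zero]
    intro h0
    rw [withDensity_apply_eq_zero (measurable_gaussianPDF 0 1)] at h0
    have huniv : {x : ℝ | gaussianPDF 0 1 x ≠ 0} = Set.univ :=
      Set.eq_univ_iff_forall.mpr fun x => (gaussianPDF_pos 0 one_ne_zero x).ne'
    rw [huniv, Set.univ_inter, Real.volume_Ioc] at h0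
    exact (ENNReal.ofReal_pos.mpr (sub_pos.mpr h)).ne' h0
  have hdec := Phi_decomp h.le
  rw [Phi_eq_toReal, Phi_eq_toReal, hdec,
    ENNReal.toReal_add (measure_ne_top _ _) (measure_ne_top _ _)]
  have := ENNReal.toReal_pos hIoc.ne' (measure_ne_top _ _)
  linarith

lemma Phi_mono : Monotone Phi := fun a b h => monotone_cdf _ h

lemma Phi_zero : Phi 0 = 1 / 2 := by
  have hneg : (gaussianReal 0 1).map ((-1 : ℝ) * ·) = gaussianReal 0 1 := by
    rw [gaussianReal_map_const_mul]
    congr 1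
    · ring
    · ext; norm_num
  have hpre : ((-1 : ℝ) * ·) ⁻¹' (Set.Iic 0) = Set.Ici 0 := by
    ext y
    simp only [Set.mem_preimage, Set.mem_Iic, Set.mem_Ici]
    constructor
    · intro hy; nlinarith
    · intro hy; nlinarith
  have hIci : (gaussianReal 0 1) (Set.Ici 0) = (gaussianReal 0 1) (Set.Iic 0) := by
    conv_lhs => rw [← hpre, ← Measure.map_apply (measurable_const_mul _) measurableSet_Iic, hneg]
  have h1 := measure_union_add_inter (μ := gaussianReal 0 1) (Set.Iic 0) (measurableSet_Ici (a := (0:ℝ)))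
  rw [Set.Iic_union_Ici, Set.Iic_inter_Ici, Set.Icc_self, measure_univ,
    stdGaussian_singleton 0, hIci, add_zero] at h1
  have h2 := congrArg ENNReal.toReal h1
  rw [ENNReal.toReal_add (measure_ne_top _ _) (measure_ne_top _ _), ENNReal.toReal_one] at h2
  rw [Phi_eq_toReal]
  linarith

lemma Phi_gap {s t : ℝ} (h : s ≤ t) :
    Phi t - Phi s ≤ (Real.sqrt (2 * Real.pi))⁻¹ * (t - s) := by
  have hbound : ∀ x : ℝ, gaussianPDF 0 1 x ≤ ENNReal.ofReal (Real.sqrt (2 * Real.pi))⁻¹ := by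
    intro x
    rw [gaussianPDF]
    apply ENNReal.ofReal_le_ofReal
    rw [gaussianPDFReal]
    have h1 : Real.exp (-(x - 0) ^ 2 / (2 * ((1:ℝ≥0):ℝ))) ≤ 1 := by
      rw [Real.exp_le_one_iff]
      have : (0:ℝ) ≤ (x - 0)^2 := sq_nonneg _
      have h2 : (0:ℝ) < 2 * ((1:ℝ≥0):ℝ) := by norm_num
      exact div_nonpos_of_nonpos_of_nonneg (by linarith) h2.le
    calc (Real.sqrt (2 * Real.pi * ((1:ℝ≥0):ℝ)))⁻¹ * Real.exp (-(x - 0) ^ 2 / (2 * ((1:ℝ≥0):ℝ)))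
        ≤ (Real.sqrt (2 * Real.pi * ((1:ℝ≥0):ℝ)))⁻¹ * 1 := by
          apply mul_le_mul_of_nonneg_left h1
          positivity
      _ = (Real.sqrt (2 * Real.pi))⁻¹ := by norm_num
  have hmeas : (gaussianReal 0 1) (Set.Ioc s t)
      ≤ ENNReal.ofReal ((Real.sqrt (2 * Real.pi))⁻¹ * (t - s)) := by
    rw [gaussianReal_of_var_ne_zero 0 one_ne_zero, withDensity_apply _ measurableSet_Ioc]
    calc ∫⁻ x in Set.Ioc s t, gaussianPDF 0 1 x
        ≤ ∫⁻ _ in Set.Ioc s t, ENNReal.ofReal (Real.sqrt (2 * Real.pi))⁻¹ :=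
          lintegral_mono fun x => hbound x
      _ = ENNReal.ofReal (Real.sqrt (2 * Real.pi))⁻¹ * volume (Set.Ioc s t) :=
          setLIntegral_const _ _
      _ = ENNReal.ofReal ((Real.sqrt (2 * Real.pi))⁻¹ * (t - s)) := by
          rw [Real.volume_Ioc, ← ENNReal.ofReal_mul (p := (Real.sqrt (2 * Real.pi))⁻¹) (by positivity)]
  have hdec := Phi_decomp h
  rw [Phi_eq_toReal, Phi_eq_toReal, hdec,
    ENNReal.toReal_add (measure_ne_top _ _) (measure_ne_top _ _)]
  have := ENNReal.toReal_le_of_le_ofReal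
    (mul_nonneg (by positivity) (sub_nonneg.mpr h)) hmeas
  linarith

lemma Phi_continuous : Continuous Phi := by
  have hL : LipschitzWith (Real.toNNReal (Real.sqrt (2 * Real.pi))⁻¹) Phi := by
    apply LipschitzWith.of_dist_le_mul
    intro a b
    rw [Real.dist_eq, Real.dist_eq, Real.coe_toNNReal _ (by positivity)]
    rcases le_total a b with hab | hab
    · rw [abs_of_nonpos (sub_nonpos.mpr (Phi_mono hab)), abs_of_nonpos (sub_nonpos.mpr hab)]
      have := Phi_gap hab
      linarith
    · rw [abs_of_nonneg (sub_nonneg.mpr (Phi_mono hab)), abs_of_nonneg (sub_nonneg.mpr hab)]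
      have := Phi_gap hab
      linarith
  exact hL.continuous

lemma exists_Phi_eq {p : ℝ} (h1 : 1 / 2 < p) (h2 : p < 1) : ∃ t, Phi t = p := by
  have htop : Filter.Tendsto Phi Filter.atTop (nhds 1) := tendsto_cdf_atTop _
  have hev : ∀ᶠ y in Filter.atTop, p ≤ Phi y :=
    htop.eventually (eventually_ge_nhds h2)
  obtain ⟨b, hb⟩ := hev.exists
  have h0b : (0:ℝ) ≤ b := by
    by_contra hc
    push_neg at hc
    have := Phi_mono hc.le
    rw [Phi_zero] at this
    linarith
  have := intermediate_value_Icc h0b Phi_continuous.continuousOn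
  have hmem : p ∈ Set.Icc (Phi 0) (Phi b) := ⟨by rw [Phi_zero]; linarith, hb⟩
  obtain ⟨t, -, ht⟩ := this hmem
  exact ⟨t, ht⟩

end BSC


open BSC in
/-- Binary randomized smoothing certificate: if the smoothed score of class 1 at `x`
exceeds 1/2, it still exceeds 1/2 within the radius `σ Φ⁻¹(p)`. -/
theorem binary_smoothing_certificate
    (d : ℕ) (σ : ℝ) (hσ : 0 < σ)
    (g1 : EuclideanSpace ℝ (Fin d) → ℝ) (hg : Measurable g1)
    (hg01 : ∀ z, g1 z ∈ Set.Icc (0 : ℝ) 1)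
    (gSmooth : EuclideanSpace ℝ (Fin d) → ℝ)
    (hgSmooth : ∀ x, gSmooth x = ∫ ε, g1 (x + ε) ∂(gaussPi d σ))
    (x : EuclideanSpace ℝ (Fin d)) (p : ℝ) (hp : p = gSmooth x) (hphalf : 1 / 2 < p) :
    ∀ δ : EuclideanSpace ℝ (Fin d), ‖δ‖ < σ * PhiInv p → 1 / 2 < gSmooth (x + δ) := by
  haveI : IsProbabilityMeasure (gaussPi d σ) := by
    rw [gaussPi]
    exact Measure.isProbabilityMeasure_map (WithLp.measurable_toLp 2 (Fin d → ℝ)).aemeasurable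
  have hFm : ∀ y : EuclideanSpace ℝ (Fin d),
      Measurable fun ε : EuclideanSpace ℝ (Fin d) => ENNReal.ofReal (g1 (y + ε)) :=
    fun y => (hg.comp (measurable_const_add y)).ennreal_ofReal
  have hrepr : ∀ y, gSmooth y
      = (∫⁻ ε, ENNReal.ofReal (g1 (y + ε)) ∂(gaussPi d σ)).toReal := by
    intro y
    rw [hgSmooth y, integral_eq_lintegral_of_nonneg_ae
      (Filter.Eventually.of_forall fun ε => (hg01 (y + ε)).1)
      ((hg.comp (measurable_const_add y)).aestronglyMeasurable)]
  have hle1 : ∀ y, (∫⁻ ε, ENNReal.ofReal (g1 (y + ε)) ∂(gaussPi d σ)) ≤ 1 := by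
    intro y
    calc ∫⁻ ε, ENNReal.ofReal (g1 (y + ε)) ∂(gaussPi d σ)
        ≤ ∫⁻ _, 1 ∂(gaussPi d σ) := lintegral_mono fun ε => ENNReal.ofReal_le_one.mpr (hg01 _).2
      _ = 1 := by rw [lintegral_one, measure_univ]
  have hofReal : ∀ y, ENNReal.ofReal (gSmooth y)
      = ∫⁻ ε, ENNReal.ofReal (g1 (y + ε)) ∂(gaussPi d σ) := by
    intro y
    rw [hrepr y, ENNReal.ofReal_toReal ((hle1 y).trans_lt ENNReal.one_lt_top).ne]
  have hgnn : ∀ y, 0 ≤ gSmooth y := fun y => by rw [hrepr y]; exact ENNReal.toReal_nonneg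
  have key : ∀ (δ : EuclideanSpace ℝ (Fin d)) (t : ℝ),
      ENNReal.ofReal (Phi t) ≤ ∫⁻ ε, ENNReal.ofReal (g1 (x + ε)) ∂(gaussPi d σ) →
      ‖δ‖ < σ * t → 1 / 2 < gSmooth (x + δ) := by
    intro δ t hle hrad
    by_cases hδ0 : δ = 0
    · rw [hδ0, add_zero, ← hp]; exact hphalf
    have hnδ : 0 < ‖δ‖ := norm_pos_iff.mpr hδ0
    have htpos : 0 < t := by nlinarith
    have hSd : ‖δ‖ ^ 2 = ∑ i, (δ i) ^ 2 := by
      rw [PiLp.norm_sq_eq_of_L2]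
      exact Finset.sum_congr rfl fun i _ => by rw [Real.norm_eq_abs, sq_abs]
    set c := σ * t * ‖δ‖ with hc
    set F : EuclideanSpace ℝ (Fin d) → ℝ≥0∞ := fun ε => ENNReal.ofReal (g1 (x + ε)) with hF
    set S : EuclideanSpace ℝ (Fin d) → ℝ := fun ε => ∑ i, ε i * δ i with hS
    set A := {ε : EuclideanSpace ℝ (Fin d) | S ε < c} with hA
    set R : EuclideanSpace ℝ (Fin d) → ℝ≥0∞ := fun ε =>
      ENNReal.ofReal (Real.exp ((2 * S ε - ∑ i, (δ i) ^ 2) / (2 * σ ^ 2))) with hRR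
    set rstar := ENNReal.ofReal (Real.exp ((2 * c - ∑ i, (δ i) ^ 2) / (2 * σ ^ 2))) with hrs
    have hSm : Measurable S :=
      Finset.measurable_sum _ fun i _ => (meas_coord i).mul_const _
    have hAm : MeasurableSet A := measurableSet_lt hSm measurable_const
    have hRm : Measurable R := ((hSm.const_mul 2).sub_const _).div_const _ |>.exp.ennreal_ofReal
    have hFm' : Measurable F := hFm x
    have h1Am : Measurable (A.indicator (1 : EuclideanSpace ℝ (Fin d) → ℝ≥0∞)) :=
      measurable_one.indicator hAm
    have hpoint : ∀ ε, A.indicator (1 : EuclideanSpace ℝ (Fin d) → ℝ≥0∞) ε * R ε + rstar * F ε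
        ≤ F ε * R ε + rstar * A.indicator (1 : EuclideanSpace ℝ (Fin d) → ℝ≥0∞) ε := by
      intro ε
      have hf0 := (hg01 (x + ε)).1
      have hf1 := (hg01 (x + ε)).2
      by_cases hε : ε ∈ A
      · simp only [Set.indicator_of_mem hε, Pi.one_apply, one_mul, mul_one]
        have hab : Real.exp ((2 * S ε - ∑ i, (δ i) ^ 2) / (2 * σ ^ 2))
            ≤ Real.exp ((2 * c - ∑ i, (δ i) ^ 2) / (2 * σ ^ 2)) := by
          apply Real.exp_le_exp.mpr
          have hSc : S ε ≤ c := le_of_lt hε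
          gcongr
        simp only [hRR, hrs, hF]
        rw [← ENNReal.ofReal_mul (Real.exp_nonneg _), ← ENNReal.ofReal_mul hf0,
          ← ENNReal.ofReal_add (Real.exp_nonneg _)
            (mul_nonneg (Real.exp_nonneg _) hf0),
          ← ENNReal.ofReal_add (mul_nonneg hf0 (Real.exp_nonneg _)) (Real.exp_nonneg _)]
        apply ENNReal.ofReal_le_ofReal
        nlinarith [mul_nonneg (sub_nonneg.mpr hf1) (sub_nonneg.mpr hab)]
      · simp only [Set.indicator_of_notMem hε, zero_mul, zero_add, mul_zero, add_zero]
        have hab : Real.exp ((2 * c - ∑ i, (δ i) ^ 2) / (2 * σ ^ 2))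
            ≤ Real.exp ((2 * S ε - ∑ i, (δ i) ^ 2) / (2 * σ ^ 2)) := by
          apply Real.exp_le_exp.mpr
          have hSc : c ≤ S ε := not_lt.mp hε
          gcongr
        rw [mul_comm]
        exact mul_le_mul_right (ENNReal.ofReal_le_ofReal hab) _
    have hμA : gaussPi d σ A = ENNReal.ofReal (Phi t) := by
      have hlt := gaussPi_linear_lt (δ := δ) hσ hδ0 c
      have harg : c / (σ * ‖δ‖) = t := by
        rw [hc]; field_simp
      rw [harg] at hlt
      exact hlt
    have hIR : (∫⁻ ε, A.indicator 1 ε * R ε ∂(gaussPi d σ))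
          + rstar * ∫⁻ ε, F ε ∂(gaussPi d σ)
        ≤ (∫⁻ ε, F ε * R ε ∂(gaussPi d σ)) + rstar * gaussPi d σ A := by
      have h1 := lintegral_mono (μ := gaussPi d σ) hpoint
      rw [lintegral_add_left (f := fun a => A.indicator 1 a * R a) (h1Am.mul hRm),
        lintegral_add_left (f := fun a => F a * R a) (hFm'.mul hRm),
        lintegral_const_mul rstar hFm', lintegral_const_mul rstar h1Am,
        lintegral_indicator_one hAm] at h1
      exact h1
    have hcancel : (∫⁻ ε, A.indicator 1 ε * R ε ∂(gaussPi d σ))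
        ≤ ∫⁻ ε, F ε * R ε ∂(gaussPi d σ) := by
      have h2 : gaussPi d σ A ≤ ∫⁻ ε, F ε ∂(gaussPi d σ) := by rw [hμA]; exact hle
      have h3 : (∫⁻ ε, A.indicator 1 ε * R ε ∂(gaussPi d σ)) + rstar * gaussPi d σ A
          ≤ (∫⁻ ε, F ε * R ε ∂(gaussPi d σ)) + rstar * gaussPi d σ A :=
        le_trans (add_le_add le_rfl (mul_le_mul_right h2 rstar)) hIR
      exact (ENNReal.add_le_add_iff_right
        (ENNReal.mul_ne_top ENNReal.ofReal_ne_top (measure_ne_top _ _))).mp h3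
    have hlhs : (∫⁻ ε, A.indicator 1 ε * R ε ∂(gaussPi d σ))
        = ENNReal.ofReal (Phi (t - ‖δ‖ / σ)) := by
      have hshift := (gaussPi_shift hσ δ (f := A.indicator 1) h1Am).symm
      have hBm : MeasurableSet {ε : EuclideanSpace ℝ (Fin d) | S ε < c - ∑ i, (δ i) ^ 2} :=
        measurableSet_lt hSm measurable_const
      calc (∫⁻ ε, A.indicator 1 ε * R ε ∂(gaussPi d σ))
          = ∫⁻ ε, A.indicator 1 (ε + δ) ∂(gaussPi d σ) := hshift
        _ = ∫⁻ ε, Set.indicator {ε : EuclideanSpace ℝ (Fin d) | S ε < c - ∑ i, (δ i) ^ 2}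
              1 ε ∂(gaussPi d σ) := by
            refine lintegral_congr fun ε => ?_
            have hmem : (ε + δ ∈ A) ↔ ε ∈ {ε' : EuclideanSpace ℝ (Fin d) |
                S ε' < c - ∑ i, (δ i) ^ 2} := by
              have hSsum : S (ε + δ) = S ε + ∑ i, (δ i) ^ 2 := by
                simp only [hS]
                rw [← Finset.sum_add_distrib]
                refine Finset.sum_congr rfl fun i _ => ?_
                have : (ε + δ) i = ε i + δ i := rfl
                rw [this]; ring
              simp only [hA, Set.mem_setOf_eq, hSsum]
              constructor <;> intro h <;> linarith
            by_cases hε : ε + δ ∈ A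
            · rw [Set.indicator_of_mem hε, Set.indicator_of_mem (hmem.mp hε)]
              rfl
            · rw [Set.indicator_of_notMem hε, Set.indicator_of_notMem (fun hmem2 => hε (hmem.mpr hmem2))]
        _ = gaussPi d σ {ε : EuclideanSpace ℝ (Fin d) | S ε < c - ∑ i, (δ i) ^ 2} :=
            lintegral_indicator_one hBm
        _ = ENNReal.ofReal (Phi (t - ‖δ‖ / σ)) := by
            have hlt := gaussPi_linear_lt (δ := δ) hσ hδ0 (c - ∑ i, (δ i) ^ 2)
            have harg : (c - ∑ i, (δ i) ^ 2) / (σ * ‖δ‖) = t - ‖δ‖ / σ := by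
              rw [← hSd, hc]
              field_simp
            rw [harg] at hlt
            exact hlt
    have hrhs : (∫⁻ ε, F ε * R ε ∂(gaussPi d σ)) = ENNReal.ofReal (gSmooth (x + δ)) := by
      have hshift := (gaussPi_shift hσ δ (f := F) hFm').symm
      calc (∫⁻ ε, F ε * R ε ∂(gaussPi d σ))
          = ∫⁻ ε, F (ε + δ) ∂(gaussPi d σ) := hshift
        _ = ∫⁻ ε, ENNReal.ofReal (g1 ((x + δ) + ε)) ∂(gaussPi d σ) := by
            refine lintegral_congr fun ε => ?_
            simp only [hF]
            rw [add_comm ε δ, ← add_assoc]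
        _ = ENNReal.ofReal (gSmooth (x + δ)) := (hofReal (x + δ)).symm
    rw [hlhs, hrhs] at hcancel
    have harg : 0 < t - ‖δ‖ / σ := by
      rw [sub_pos, div_lt_iff₀ hσ]
      linarith [hrad]
    have hPhi : 1 / 2 < Phi (t - ‖δ‖ / σ) := by
      rw [← Phi_zero]; exact Phi_strict harg
    have hfin : Phi (t - ‖δ‖ / σ) ≤ gSmooth (x + δ) :=
      (ENNReal.ofReal_le_ofReal_iff (hgnn _)).mp hcancel
    linarith
  intro δ hδrad
  have hofp : ENNReal.ofReal p = ∫⁻ ε, ENNReal.ofReal (g1 (x + ε)) ∂(gaussPi d σ) := by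
    rw [hp, hofReal x]
  have hple : p ≤ 1 := by
    rw [hp, hrepr x]
    calc (∫⁻ ε, ENNReal.ofReal (g1 (x + ε)) ∂(gaussPi d σ)).toReal
        ≤ (1 : ℝ≥0∞).toReal := ENNReal.toReal_mono ENNReal.one_ne_top (hle1 x)
      _ = 1 := ENNReal.toReal_one
  by_cases hp1 : p < 1
  · obtain ⟨t0, ht0⟩ := exists_Phi_eq hphalf hp1
    have hinv : Phi (PhiInv p) = p := Function.invFun_eq ⟨t0, ht0⟩
    exact key δ (PhiInv p) (le_of_eq (by rw [hinv, hofp])) hδrad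
  · have hpeq : p = 1 := le_antisymm hple (not_lt.mp hp1)
    refine key δ (‖δ‖ / σ + 1) ?_ ?_
    · rw [← hofp, hpeq, ENNReal.ofReal_one]
      exact ENNReal.ofReal_le_one.mpr (cdf_le_one _ _)
    · have hteq : σ * (‖δ‖ / σ + 1) = ‖δ‖ + σ := by field_simp
      rw [hteq]; linarith
end

section
/- Let ℓ ∈ ℝ, u ∈ ℝ with ℓ < 0 < u. The convex hull of the graph {(z, ReLU(z)) : z ∈ [ℓ, u]} ⊆ ℝ² is exactly the triangle {(z, t) : t ≥ 0, t ≥ z, t ≤ (u/(u−ℓ))(z − ℓ)}. -/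
/-- Triangle relaxation of ReLU: for `ℓ < 0 < u`, the convex hull of the graph of
`ReLU` over `[ℓ, u]` is exactly the triangle described by the three linear inequalities
`t ≥ 0`, `t ≥ z`, `t ≤ (u/(u−ℓ))(z − ℓ)`. -/
theorem relu_triangle_relaxation (l u : ℝ) (hl : l < 0) (hu : 0 < u) :
    convexHull ℝ {p : ℝ × ℝ | p.1 ∈ Set.Icc l u ∧ p.2 = max 0 p.1} =
      {p : ℝ × ℝ | 0 ≤ p.2 ∧ p.1 ≤ p.2 ∧ p.2 ≤ u / (u - l) * (p.1 - l)} := by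
  have hul : (0:ℝ) < u - l := by linarith
  set S : Set (ℝ × ℝ) := {p : ℝ × ℝ | p.1 ∈ Set.Icc l u ∧ p.2 = max 0 p.1} with hS
  apply Set.Subset.antisymm
  · -- hull ⊆ triangle
    apply convexHull_min
    · rintro ⟨z, t⟩ ⟨⟨hzl, hzu⟩, ht⟩
      have ht' : t = max 0 z := ht
      clear ht
      subst ht'
      refine ⟨le_max_left _ _, le_max_right _ _, ?_⟩
      rcases le_total z 0 with h0 | h0
      · rw [max_eq_left h0]
        apply mul_nonneg (div_nonneg hu.le hul.le)
        linarith
      · rw [max_eq_right h0, div_mul_eq_mul_div, le_div_iff₀ hul]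
        nlinarith
    · rintro ⟨z1, t1⟩ ⟨h1a, h1b, h1c⟩ ⟨z2, t2⟩ ⟨h2a, h2b, h2c⟩ a b ha hb hab
      simp only [Set.mem_setOf_eq, Prod.smul_mk, Prod.mk_add_mk, smul_eq_mul] at *
      refine ⟨by nlinarith, by nlinarith, ?_⟩
      have H1 : t1 * (u - l) ≤ u * (z1 - l) := by
        rw [div_mul_eq_mul_div, le_div_iff₀ hul] at h1c; linarith
      have H2 : t2 * (u - l) ≤ u * (z2 - l) := by
        rw [div_mul_eq_mul_div, le_div_iff₀ hul] at h2c; linarith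
      rw [div_mul_eq_mul_div, le_div_iff₀ hul]
      have habl : u * l * (a + b) = u * l := by rw [hab]; ring
      nlinarith [mul_le_mul_of_nonneg_left H1 ha, mul_le_mul_of_nonneg_left H2 hb, habl]
  · -- triangle ⊆ hull
    rintro ⟨z, t⟩ ⟨h0, hz, h3⟩
    simp only [Set.mem_setOf_eq] at h0 hz h3
    have h3' : t * (u - l) ≤ u * (z - l) := by
      rw [div_mul_eq_mul_div, le_div_iff₀ hul] at h3
      linarith
    have hzu : z ≤ u := by nlinarith
    have htu : t ≤ u := by nlinarith
    rcases eq_or_lt_of_le h0 with h | ht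
    · -- t = 0 : point is on the graph itself
      apply subset_convexHull
      have hz0 : z ≤ 0 := by linarith [hz, h.symm]
      have hzl : l ≤ z := by nlinarith
      exact ⟨⟨hzl, hzu⟩, by rw [max_eq_left hz0]; exact h.symm⟩
    · rcases eq_or_lt_of_le htu with he | hlt
      · -- t = u : point is (u,u), on the graph
        apply subset_convexHull
        have hzu' : z = u := by nlinarith
        subst hzu'
        exact ⟨⟨by linarith, le_refl _⟩, by rw [max_eq_right hu.le]; linarith⟩
      · -- 0 < t < u : combination of (x,0) and (u,u)
        set x : ℝ := u * (z - t) / (u - t) with hx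
        have hut : (0:ℝ) < u - t := by linarith
        have hx0 : x ≤ 0 := by
          apply div_nonpos_of_nonpos_of_nonneg
          · nlinarith
          · linarith
        have hxl : l ≤ x := by
          rw [hx, le_div_iff₀ hut]
          nlinarith
        have hA : ((x, (0:ℝ)) : ℝ × ℝ) ∈ S := ⟨⟨hxl, le_trans hx0 hu.le⟩, (max_eq_left hx0).symm⟩
        have hB : ((u, u) : ℝ × ℝ) ∈ S :=
          ⟨⟨by linarith, le_refl _⟩, (max_eq_right hu.le).symm⟩
        have key : (1 - t/u) • ((x, (0:ℝ)) : ℝ × ℝ) + (t/u) • ((u, u) : ℝ × ℝ) = (z, t) := by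
          have hu' : u ≠ 0 := ne_of_gt hu
          have hut' : u - t ≠ 0 := ne_of_gt hut
          simp only [Prod.smul_mk, Prod.mk_add_mk, smul_eq_mul, Prod.mk.injEq]
          refine ⟨?_, ?_⟩
          · field_simp [hx]
            rw [hx]; field_simp; ring
          · field_simp
            ring
        have := (convex_convexHull ℝ S) (subset_convexHull ℝ S hA) (subset_convexHull ℝ S hB)
          (a := 1 - t/u) (b := t/u)
          (by rw [sub_nonneg, div_le_one hu]; exact hlt.le)
          (by positivity) (by ring)
        rwa [key] at this
end
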